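/- Let n ≥ 2 and let B = [[n,1,0],[1,1,1],[0,1,1]]. There is no nonzero 3×1 nonnegative integer column vector R such that B·R = R·n. -/
import Mathlib


/-- Let `n ≥ 2` and `B = [[n,1,0],[1,1,1],[0,1,1]]`. There is no nonzero nonnegative
integer `3×1` column vector `R` with `B·R = n·R`, i.e. the only nonnegative integer
eigenvector of `B` with eigenvalue `n` is `0`. -/
theorem no_nonzero_column_vector_intertwining_cuntz_splice (n : ℕ) (hn : 2 ≤ n)
    (R : Matrix (Fin 3) (Fin 1) ℤ) (hRpos : ∀ i j, 0 ≤ R i j)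
    (hR : !![(n : ℤ), 1, 0; 1, 1, 1; 0, 1, 1] * R = (n : ℤ) • R) :
    R = 0 := by
  have h0 := congrFun (congrFun hR 0) 0
  have h1 := congrFun (congrFun hR 1) 0
  simp [Matrix.mul_apply, Fin.sum_univ_three, Matrix.smul_apply] at h0 h1
  have hr1 : R 1 0 = 0 := by linarith
  have hr0 : R 0 0 = 0 := by
    have := hRpos 0 0; have := hRpos 2 0; rw [hr1] at h1; linarith
  have hr2 : R 2 0 = 0 := by
    have := hRpos 0 0; have := hRpos 2 0; rw [hr1] at h1; linarith
  ext i j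
  fin_cases i <;> fin_cases j <;> simpa [hr0, hr1, hr2]
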